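/- Let a be a weak composition of length n with exactly ℓ nonzero entries, and for m ≥ 1 let 0^m×a denote the weak composition of length m+n obtained by prepending m zeros to a. Then setting x_{m+ℓ+1} = ⋯ = x_{m+n} = 0 in 𝔐_{0^m×a} yields M_{flat(a)}(x_1,…,x_{m+ℓ}), and setting x_{m+ℓ+1} = ⋯ = x_{m+n} = 0 in 𝔉_{0^m×a} yields F_{flat(a)}(x_1,…,x_{m+ℓ}). Consequently, as m → ∞ the polynomials 𝔐_{0^m×a} converge coefficientwise to the monomial quasisymmetric function M_{flat(a)} and the polynomials 𝔉_{0^m×a} converge coefficientwise to the fundamental quasisymmetric function F_{flat(a)}. -/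

import Mathlib

open scoped Classical

namespace SlidePaper

/-- Sum of the first `i` entries of a weak composition of length `n`. -/
def psum {n : ℕ} (a : Fin n → ℕ) (i : ℕ) : ℕ :=
  ∑ j ∈ Finset.univ.filter (fun j : Fin n => (j : ℕ) < i), a j

/-- `b` dominates `a`: all partial sums of `b` are at least those of `a`. -/
def Dominates {n : ℕ} (b a : Fin n → ℕ) : Prop :=
  ∀ i : Fin (n + 1), psum a i ≤ psum b i

/-- The flattening of a weak composition: the list of its nonzero entries in order. -/
def flat {n : ℕ} (a : Fin n → ℕ) : List ℕ :=
  (List.ofFn a).filter (fun x => x ≠ 0)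

/-- `β` refines `α`: `β` splits into consecutive blocks with sums `α₁, α₂, …`. -/
def Refines (β α : List ℕ) : Prop :=
  ∃ L : List (List ℕ), L.flatten = β ∧ L.map List.sum = α

/-- All weak compositions of length `n` with entries at most `k`. -/
def wcFinset (n k : ℕ) : Finset (Fin n → ℕ) :=
  Fintype.piFinset fun _ => Finset.range (k + 1)

/-- The monomial slide polynomial `𝔐_a`. -/
noncomputable def slideM {n : ℕ} (a : Fin n → ℕ) : MvPolynomial (Fin n) ℤ :=
  ∑ b ∈ (wcFinset n (∑ i, a i)).filter (fun b => Dominates b a ∧ flat b = flat a),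
    MvPolynomial.monomial (Finsupp.equivFunOnFinite.symm b) 1

/-- The fundamental slide polynomial `𝔉_a`. -/
noncomputable def slideF {n : ℕ} (a : Fin n → ℕ) : MvPolynomial (Fin n) ℤ :=
  ∑ b ∈ (wcFinset n (∑ i, a i)).filter (fun b => Dominates b a ∧ Refines (flat b) (flat a)),
    MvPolynomial.monomial (Finsupp.equivFunOnFinite.symm b) 1

/-- A weak composition is quasi-flat if its nonzero entries occupy consecutive positions. -/
def QuasiFlat {n : ℕ} (a : Fin n → ℕ) : Prop :=
  ∀ i j l : Fin n, i ≤ j → j ≤ l → a i ≠ 0 → a l ≠ 0 → a j ≠ 0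

/-- `b` strongly dominates `a`. -/
def StronglyDominates {n : ℕ} (b a : Fin n → ℕ) : Prop :=
  Dominates b a ∧ ∀ c : Fin n → ℕ, Dominates c a → flat c = flat b → Dominates c b

/-- The exponent vector placing the parts of `α` at the positions `i`. -/
noncomputable def placeExp {n : ℕ} (α : List ℕ) (i : Fin α.length → Fin n) : Fin n →₀ ℕ :=
  ∑ t : Fin α.length, Finsupp.single (i t) (α.get t)

/-- `f` is quasisymmetric in the variables `x_1, …, x_k` (0-indexed: `x_0, …, x_{k-1}`). -/
def IsQuasisymmetricIn {n : ℕ} (k : ℕ) (f : MvPolynomial (Fin n) ℤ) : Prop :=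
  ∀ α : List ℕ, (∀ x ∈ α, 0 < x) →
    ∀ i j : Fin α.length → Fin n, StrictMono i → StrictMono j →
      (∀ t, (i t : ℕ) < k) → (∀ t, (j t : ℕ) < k) →
      MvPolynomial.coeff (placeExp α i) f = MvPolynomial.coeff (placeExp α j) f

/-- The monomial quasisymmetric polynomial `M_α(x_1, …, x_k)` inside `ℤ[x_1, …, x_n]`. -/
noncomputable def Mqs (n k : ℕ) (α : List ℕ) : MvPolynomial (Fin n) ℤ :=
  ∑ i ∈ (Finset.univ : Finset (Fin α.length → Fin n)).filter
      (fun i : Fin α.length → Fin n => StrictMono i ∧ ∀ t, (i t : ℕ) < k),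
    ∏ t : Fin α.length, (MvPolynomial.X (i t) : MvPolynomial (Fin n) ℤ) ^ α.get t

/-- The fundamental quasisymmetric polynomial `F_α(x_1, …, x_k)` inside `ℤ[x_1, …, x_n]`. -/
noncomputable def Fqs (n k : ℕ) (α : List ℕ) : MvPolynomial (Fin n) ℤ :=
  ∑ c ∈ (Finset.univ : Finset (Composition α.sum)).filter
      (fun c => Refines c.blocks α ∧ c.blocks.length ≤ k),
    Mqs n k c.blocks

/-- Place the weak composition `a` (of length `N`) at offset `k` inside length `M`. -/
def shiftComp {N : ℕ} (k M : ℕ) (a : Fin N → ℕ) : Fin M → ℕ :=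
  fun i => if h : k ≤ (i : ℕ) ∧ (i : ℕ) - k < N then a ⟨(i : ℕ) - k, h.2⟩ else 0

/-- Spread the values `g` to positions `ι` inside a weak composition of length `n`. -/
def spread {l n : ℕ} (ι : Fin l → Fin n) (g : Fin l → ℕ) : Fin n → ℕ :=
  fun i => ∑ k, if ι k = i then g k else 0

/-- The monomial quasisymmetric function `M_α` in infinitely many variables. -/
noncomputable def MqsFun (α : List ℕ) : MvPowerSeries ℕ ℤ :=
  fun d => if ∃ i : Fin α.length → ℕ, StrictMono i ∧
      d = ∑ t : Fin α.length, Finsupp.single (i t) (α.get t) then 1 else 0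

/-- The fundamental quasisymmetric function `F_α` in infinitely many variables. -/
noncomputable def FqsFun (α : List ℕ) : MvPowerSeries ℕ ℤ :=
  ∑ c ∈ (Finset.univ : Finset (Composition α.sum)).filter (fun c => Refines c.blocks α),
    MqsFun c.blocks

/-- The cells of the Young diagram of `lam` (French notation): row `r` (from the
bottom, 0-indexed) has `lam.get r` cells. -/
abbrev Cells (lam : List ℕ) := Σ r : Fin lam.length, Fin (lam.get r)

/-- A filling of `lam` with entries in `{1, …, n}` (encoded as `Fin n`) is a semistandard
Young tableau: rows weakly increase left to right, columns strictly increase bottom to top. -/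
def IsSSYT {n : ℕ} {lam : List ℕ} (T : Cells lam → Fin n) : Prop :=
  (∀ (r : Fin lam.length) (c c' : Fin (lam.get r)), c ≤ c' → T ⟨r, c⟩ ≤ T ⟨r, c'⟩) ∧
  (∀ (r r' : Fin lam.length) (c' : Fin (lam.get r')) (h : (c' : ℕ) < lam.get r),
      (r : ℕ) < (r' : ℕ) → T ⟨r, ⟨c', h⟩⟩ < T ⟨r', c'⟩)

/-- The weight of a filling: the `v`-th entry counts the occurrences of the value `v`. -/
def wtT {n : ℕ} {lam : List ℕ} (T : Cells lam → Fin n) : Fin n → ℕ :=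
  fun v => (Finset.univ.filter (fun x : Cells lam => T x = v)).card

/-- A filling is quasi-Yamanouchi if for every value `v > 1`, the leftmost occurrence of `v`
lies weakly left of some occurrence of `v - 1`. -/
def IsQY {n : ℕ} {lam : List ℕ} (T : Cells lam → Fin n) : Prop :=
  ∀ (v : Fin n) (x : Cells lam), T x = v → 0 < (v : ℕ) →
    (∀ y : Cells lam, T y = v → (x.2 : ℕ) ≤ (y.2 : ℕ)) →
    ∃ z : Cells lam, (T z : ℕ) + 1 = (v : ℕ) ∧ (x.2 : ℕ) ≤ (z.2 : ℕ)

/-- The Schur polynomial `s_lam(x_1, …, x_n)` as the generating function of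
semistandard Young tableaux. -/
noncomputable def schurPoly (n : ℕ) (lam : List ℕ) : MvPolynomial (Fin n) ℤ :=
  ∑ T ∈ (Finset.univ : Finset (Cells lam → Fin n)).filter (fun T => IsSSYT T),
    MvPolynomial.monomial (Finsupp.equivFunOnFinite.symm (wtT T)) 1

/-- One destandardization step on fillings: for some value `v` occurring in `T` whose
leftmost occurrence is strictly right of every occurrence of `v - 1`, every `v` is
decremented to `v - 1`. -/
def TabStep {n : ℕ} {lam : List ℕ} (T T' : Cells lam → Fin n) : Prop :=
  ∃ v : Fin n, 0 < (v : ℕ) ∧ (∃ x, T x = v) ∧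
    (∀ x y : Cells lam, T x = v → (T y : ℕ) + 1 = (v : ℕ) → (y.2 : ℕ) < (x.2 : ℕ)) ∧
    ∀ x : Cells lam, (T' x : ℕ) = if T x = v then (v : ℕ) - 1 else (T x : ℕ)

/-- The reading word of a set of crosses: rows are read from top to bottom, each row from
left to right, the cross in (0-indexed) row `i` and column `j` recording the letter `i + j`
(representing the simple transposition swapping `i + j` and `i + j + 1` of `{0, 1, 2, …}`). -/
def readWord (P : Finset (ℕ × ℕ)) : List ℕ :=
  ((List.range (P.sup Prod.fst + 1)).reverse).flatMap
    (fun i => ((List.range (P.sup Prod.snd + 1)).filter (fun j => decide ((i, j) ∈ P))).map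
      (fun j => i + j))

/-- The permutation `s_{i_ℓ} ⋯ s_{i_1}` associated to the word `(i_1, …, i_ℓ)`,
where `s_k` swaps `k` and `k + 1`. -/
def wordPerm (l : List ℕ) : Equiv.Perm ℕ :=
  ((l.map (fun k => Equiv.swap k (k + 1))).reverse).prod

/-- A word is reduced if no shorter word has the same product. -/
def IsReducedWord (l : List ℕ) : Prop :=
  ∀ l' : List ℕ, wordPerm l' = wordPerm l → l.length ≤ l'.length

/-- `P` is a reduced pipe dream of shape `w`: the pipes trace out `w` and no two pipes
cross more than once, equivalently the reading word of `P` is a reduced word for `w`. -/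
def IsPD (w : Equiv.Perm ℕ) (P : Finset (ℕ × ℕ)) : Prop :=
  wordPerm (readWord P) = w ∧ IsReducedWord (readWord P)

/-- `P` is a quasi-Yamanouchi pipe dream of shape `w`: for every row, the westernmost cross
is in the first column or lies weakly west of some cross in the row above. -/
def IsQPD (w : Equiv.Perm ℕ) (P : Finset (ℕ × ℕ)) : Prop :=
  IsPD w P ∧ ∀ i j : ℕ, (i, j) ∈ P → (∀ j', (i, j') ∈ P → j ≤ j') →
    (j = 0 ∨ ∃ j', (i + 1, j') ∈ P ∧ j ≤ j')

/-- One destandardization step on pipe dreams: a row with no cross in the first column,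
all of whose crosses lie strictly east of every cross in the row above, has all its
crosses moved one step northwest. -/
def PDStep (P P' : Finset (ℕ × ℕ)) : Prop :=
  ∃ r : ℕ, (∃ j, (r, j) ∈ P) ∧ (r, 0) ∉ P ∧
    (∀ j j', (r, j) ∈ P → (r + 1, j') ∈ P → j' < j) ∧
    P' = P.filter (fun p => p.1 ≠ r) ∪
      (P.filter (fun p => p.1 = r)).image (fun p => (r + 1, p.2 - 1))

/-- The number of crosses of `P` in (0-indexed) row `i`. -/
def rowWt (P : Finset (ℕ × ℕ)) (i : ℕ) : ℕ := (P.filter (fun p => p.1 = i)).card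

/-- The weight of a pipe dream, as a weak composition of length `n`. -/
def wtFin (n : ℕ) (P : Finset (ℕ × ℕ)) : Fin n → ℕ := fun i => rowWt P (i : ℕ)

/-- The flattened weight of a pipe dream: the list of nonzero row counts, bottom row first. -/
def flatWt (P : Finset (ℕ × ℕ)) : List ℕ :=
  ((List.range (P.sup Prod.fst + 1)).map (rowWt P)).filter (fun x => x ≠ 0)

/-- The Schubert polynomial of `w` in the variables `x_1, …, x_n`, as the generating
function of reduced pipe dreams of shape `w`. -/
noncomputable def SchubertPoly (n : ℕ) (w : Equiv.Perm ℕ) : MvPolynomial (Fin n) ℤ :=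
  ∑ᶠ P ∈ {P : Finset (ℕ × ℕ) | IsPD w P},
    MvPolynomial.monomial (Finsupp.equivFunOnFinite.symm (wtFin n P)) 1

/-- The Lehmer code of `w` (0-indexed): `lehmer w i` counts `j > i` with `w j < w i`. -/
noncomputable def lehmer (w : Equiv.Perm ℕ) (i : ℕ) : ℕ :=
  Set.ncard {j : ℕ | i < j ∧ w j < w i}

/-- The Lehmer code of `w` as a weak composition of length `n`. -/
noncomputable def lehmerFin (n : ℕ) (w : Equiv.Perm ℕ) : Fin n → ℕ :=
  fun i => lehmer w (i : ℕ)

/-- The number of inversions of `w`. -/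
noncomputable def invCount (w : Equiv.Perm ℕ) : ℕ :=
  Set.ncard {p : ℕ × ℕ | p.1 < p.2 ∧ w p.2 < w p.1}

/-- The largest entry of the Lehmer code of `w`. -/
noncomputable def maxLehmer (w : Equiv.Perm ℕ) : ℕ :=
  sSup (Set.range (lehmer w))

/-- The (0-indexed) position of the first descent of `w`. -/
noncomputable def firstDescent (w : Equiv.Perm ℕ) : ℕ :=
  sInf {i : ℕ | w (i + 1) < w i}

/-- `δ(w) = 1` if every position attaining `max(L(w))` is at or before the first descent,
and `δ(w) = 0` otherwise. -/
noncomputable def delta (w : Equiv.Perm ℕ) : ℤ :=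
  if ∀ i : ℕ, lehmer w i = maxLehmer w → i ≤ firstDescent w then 1 else 0

/-- `η(w) = inv(w) − max(L(w)) + δ(w) − min{i : w_i > w_{i+1}}`. -/
noncomputable def eta (w : Equiv.Perm ℕ) : ℤ :=
  (invCount w : ℤ) - (maxLehmer w : ℤ) + delta w - ((firstDescent w : ℤ) + 1)

/-- The decomposition of a list into maximal strictly increasing runs. -/
def runsStrict : List ℕ → List (List ℕ)
  | [] => []
  | x :: rest =>
    match runsStrict rest, rest with
    | r :: rs, y :: _ => if x < y then (x :: r) :: rs else [x] :: r :: rs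
    | _, _ => [[x]]

/-- The descent composition of a word: lengths of its maximal increasing runs, a new run
beginning whenever a letter is followed by a weakly smaller letter. -/
def desStrict (l : List ℕ) : List ℕ := (runsStrict l).map List.length

/-- The decomposition of a list into maximal weakly increasing runs. -/
def runsWeak : List ℕ → List (List ℕ)
  | [] => []
  | x :: rest =>
    match runsWeak rest, rest with
    | r :: rs, y :: _ => if x ≤ y then (x :: r) :: rs else [x] :: r :: rs
    | _, _ => [[x]]

/-- The descent composition of a word: the lengths of its maximal weakly increasing runs. -/
def desComp (l : List ℕ) : List ℕ := (runsWeak l).map List.length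

/-- The permutation `1^m × w`, fixing `0, …, m-1` and acting by `w` shifted by `m` above. -/
def shiftPerm (m : ℕ) (w : Equiv.Perm ℕ) : Equiv.Perm ℕ where
  toFun i := if i < m then i else w (i - m) + m
  invFun i := if i < m then i else w.symm (i - m) + m
  left_inv i := by
    dsimp only
    by_cases h : i < m
    · simp [h]
    · have h2 : ¬ (w (i - m) + m < m) := by omega
      rw [if_neg h, if_neg h2, Nat.add_sub_cancel, Equiv.symm_apply_apply]
      omega
  right_inv i := by
    dsimp only
    by_cases h : i < m
    · simp [h]
    · have h2 : ¬ (w.symm (i - m) + m < m) := by omega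
      rw [if_neg h, if_neg h2, Nat.add_sub_cancel, Equiv.apply_symm_apply]
      omega

/-- The quasi-shuffle product of two (strong) compositions, as a multiset of compositions. -/
def qShuffle : List ℕ → List ℕ → Multiset (List ℕ)
  | [], β => {β}
  | α, [] => {α}
  | a :: α, b :: β =>
      ((qShuffle α (b :: β)).map (a :: ·)) + ((qShuffle (a :: α) β).map (b :: ·)) +
        ((qShuffle α β).map ((a + b) :: ·))
termination_by α β => α.length + β.length
decreasing_by all_goals (simp only [List.length_cons]; omega)

def shuffles : List ℕ → List ℕ → Multiset (List ℕ)
  | [], B => {B}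
  | A, [] => {A}
  | x :: A, y :: B =>
      ((shuffles A (y :: B)).map (x :: ·)) + ((shuffles (x :: A) B).map (y :: ·))
termination_by A B => A.length + B.length
decreasing_by all_goals (simp only [List.length_cons]; omega)

/-- The word `(2n-1)^{a_1} (2n-3)^{a_2} ⋯ 1^{a_n}` associated to a weak composition `a`. -/
def wordA {n : ℕ} (a : Fin n → ℕ) : List ℕ :=
  (List.ofFn (fun i : Fin n => List.replicate (a i) (2 * n - 2 * (i : ℕ) - 1))).flatten

/-- The word `(2n)^{b_1} (2n-2)^{b_2} ⋯ 2^{b_n}` associated to a weak composition `b`. -/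
def wordB {n : ℕ} (b : Fin n → ℕ) : List ℕ :=
  (List.ofFn (fun i : Fin n => List.replicate (b i) (2 * n - 2 * (i : ℕ)))).flatten

/-- A list (padded with trailing zeros) dominates a weak composition of length `n`. -/
def DominatesList {n : ℕ} (l : List ℕ) (a : Fin n → ℕ) : Prop :=
  ∀ i : Fin (n + 1), psum a (i : ℕ) ≤ ((l.take (i : ℕ)).sum)

/-- The number of letters of the `A`-word (the odd letters) in the `k`-th weakly
increasing run of `C`. -/
def runCountA (C : List ℕ) (k : Fin (runsWeak C).length) : ℕ :=
  (((runsWeak C).get k).filter (fun z => z % 2 = 1)).length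

/-- The number of letters of the `B`-word (the even letters) in the `k`-th weakly
increasing run of `C`. -/
def runCountB (C : List ℕ) (k : Fin (runsWeak C).length) : ℕ :=
  (((runsWeak C).get k).filter (fun z => z % 2 = 0)).length

/-- The length of the `k`-th weakly increasing run of `C`. -/
def runLen (C : List ℕ) (k : Fin (runsWeak C).length) : ℕ :=
  ((runsWeak C).get k).length

/-- `c = bump_{(a,b)}(C)`: the unique weak composition of length `n` obtained by inserting
zero parts into `Des(C)` so that the correspondingly placed `Des_A` and `Des_B` dominate
`a` and `b`, minimal in dominance order among all such insertions. -/
def IsBumpS {n : ℕ} (a b : Fin n → ℕ) (C : List ℕ) (c : Fin n → ℕ) : Prop :=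
  ∃ ι : Fin (runsWeak C).length → Fin n, StrictMono ι ∧
    c = spread ι (runLen C) ∧
    Dominates (spread ι (runCountA C)) a ∧ Dominates (spread ι (runCountB C)) b ∧
    ∀ ι' : Fin (runsWeak C).length → Fin n, StrictMono ι' →
      Dominates (spread ι' (runCountA C)) a → Dominates (spread ι' (runCountB C)) b →
      Dominates (spread ι' (runLen C)) c

/-- The multiplicity `[c ∣ a ⧢ b]` of `c` in the slide product of `a` and `b`: the number of
shuffles `C` of the words of `a` and `b` lying in the shuffle set `SS(a,b)` with
`bump_{(a,b)}(C) = c`. -/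
noncomputable def slideMult {n : ℕ} (a b c : Fin n → ℕ) : ℕ :=
  Multiset.card ((shuffles (wordA a) (wordB b)).filter
    (fun C => DominatesList ((runsWeak C).map
        (fun r => (r.filter (fun z => z % 2 = 1)).length)) a ∧
      DominatesList ((runsWeak C).map (fun r => (r.filter (fun z => z % 2 = 0)).length)) b ∧
      IsBumpS a b C c))

/-- Membership in the quasi-shuffle set `QSS(a,b)`: a pair `(γ_a, γ_b)` of weak compositions
of a common length at most `n` with `γ_a ≥ a`, `flat(γ_a) = flat(a)`, `γ_b ≥ b`,
`flat(γ_b) = flat(b)` (after padding with trailing zeros), and all entries of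
`γ_a + γ_b` positive. -/
def InQSS {n : ℕ} (a b : Fin n → ℕ) (x : (l : ℕ) × (Fin l → ℕ) × (Fin l → ℕ)) : Prop :=
  x.1 ≤ n ∧
  Dominates (shiftComp 0 n x.2.1) a ∧ flat x.2.1 = flat a ∧
  Dominates (shiftComp 0 n x.2.2) b ∧ flat x.2.2 = flat b ∧
  ∀ k : Fin x.1, 0 < x.2.1 k + x.2.2 k

/-- `c = bump_{(a,b)}(γ_a, γ_b)`: the unique weak composition `c` of length `n` with
`flat(c) = γ_a + γ_b` whose decomposition `c = c_a + c_b` satisfies `c_a ≥ a` and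
`c_b ≥ b`, minimal in dominance order among all such compositions. -/
def IsBumpQ {n : ℕ} (a b : Fin n → ℕ) (x : (l : ℕ) × (Fin l → ℕ) × (Fin l → ℕ))
    (c : Fin n → ℕ) : Prop :=
  ∃ ι : Fin x.1 → Fin n, StrictMono ι ∧
    c = spread ι (fun k => x.2.1 k + x.2.2 k) ∧
    Dominates (spread ι x.2.1) a ∧ Dominates (spread ι x.2.2) b ∧
    ∀ ι' : Fin x.1 → Fin n, StrictMono ι' →
      Dominates (spread ι' x.2.1) a → Dominates (spread ι' x.2.2) b →
      Dominates (spread ι' (fun k => x.2.1 k + x.2.2 k)) c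

/-- The multiplicity `[c ∣ a ⧻ b]` of `c` in the quasi-slide product of `a` and `b`: the
number of pairs in the quasi-shuffle set `QSS(a,b)` whose bump is `c`. -/
noncomputable def qsMult {n : ℕ} (a b c : Fin n → ℕ) : ℕ :=
  Nat.card {x : (l : ℕ) × (Fin l → ℕ) × (Fin l → ℕ) // InQSS a b x ∧ IsBumpQ a b x c}

/-- The Stanley symmetric function `S_w`. -/
noncomputable def StanleySym (w : Equiv.Perm ℕ) : MvPowerSeries ℕ ℤ :=
  ∑ᶠ l ∈ {l : List ℕ | wordPerm l = w ∧ IsReducedWord l}, FqsFun (desStrict l)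

lemma sum_filter_ne_zero (L : List ℕ) : (L.filter (fun x => x ≠ 0)).sum = L.sum := by
  induction L with
  | nil => rfl
  | cons x t ih =>
    by_cases hx : x = 0
    · subst hx; simpa using ih
    · rw [List.filter_cons, if_pos (by simpa using hx), List.sum_cons, ih, List.sum_cons]

lemma take_drop_sum (L : List ℕ) (q : ℕ) : (L.take q).sum + (L.drop q).sum = L.sum := by
  conv_rhs => rw [← List.take_append_drop q L]
  rw [List.sum_append]

lemma drop_sum_anti (L : List ℕ) {s t : ℕ} (h : s ≤ t) : (L.drop t).sum ≤ (L.drop s).sum := by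
  have h2 : L.drop t = (L.drop s).drop (t - s) := by rw [List.drop_drop]; congr 1; omega
  rw [h2]
  exact List.Sublist.sum_le_sum (List.drop_sublist _ _) (fun a _ => Nat.zero_le a)

lemma length_le_sum_list {K : List ℕ} (h : ∀ x ∈ K, 1 ≤ x) : K.length ≤ K.sum := by
  induction K with
  | nil => simp
  | cons x t ih =>
    simp only [List.length_cons, List.sum_cons]
    have h1 := h x (by simp)
    have h2 := ih (fun y hy => h y (by simp [hy]))
    omega

lemma Refines.sum_eq {β α : List ℕ} (h : Refines β α) : β.sum = α.sum := by
  obtain ⟨L, hf, hs⟩ := h; rw [← hf, ← hs, List.sum_flatten]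

lemma refines_refl (α : List ℕ) : Refines α α := by
  refine ⟨α.map (fun x => [x]), ?_, ?_⟩
  · induction α with
    | nil => rfl
    | cons x t ih => simp [ih]
  · induction α with
    | nil => rfl
    | cons x t ih => simp [ih]

lemma Refines.suffix_sum {β α : List ℕ} (hpos : ∀ x ∈ α, x ≠ 0) (h : Refines β α) (t : ℕ) :
    (β.drop (β.length - t)).sum ≤ (α.drop (α.length - t)).sum := by
  by_cases ht : α.length ≤ t
  · have h1 : α.drop (α.length - t) = α := by rw [Nat.sub_eq_zero_of_le ht]; rfl
    rw [h1]
    calc (β.drop (β.length - t)).sum ≤ (β.drop 0).sum := drop_sum_anti _ (Nat.zero_le _)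
      _ = β.sum := by rfl
      _ = α.sum := h.sum_eq
  · push_neg at ht
    obtain ⟨L, hf, hs⟩ := h
    set j := α.length - t with hj
    have hjL : j ≤ L.length := by
      have : L.length = α.length := by rw [← hs, List.length_map]
      omega
    have hdroplen : (L.drop j).length = t := by
      rw [List.length_drop, ← hs, List.length_map] at *
      omega
    -- each block nonempty
    have hblock : ∀ b ∈ L, 1 ≤ b.length := by
      intro b hb
      have : b.sum ∈ α := by rw [← hs]; exact List.mem_map_of_mem hb
      have hbs := hpos _ this
      rcases b with _ | ⟨y, b⟩
      · simp at hbs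
      · simp
    have hsplit : β = (L.take j).flatten ++ (L.drop j).flatten := by
      rw [← hf, ← List.flatten_append, List.take_append_drop]
    have hdropflat : β.drop ((L.take j).flatten.length) = (L.drop j).flatten := by
      rw [hsplit, List.drop_left]
    have hlen2 : t ≤ (L.drop j).flatten.length := by
      rw [List.length_flatten]
      have := length_le_sum_list (K := (L.drop j).map List.length) ?_
      · rw [List.length_map, hdroplen] at this; exact this
      · intro x hx
        obtain ⟨b, hb, rfl⟩ := List.mem_map.1 hx
        exact hblock b (List.mem_of_mem_drop hb)
    have hslen : (L.take j).flatten.length ≤ β.length - t := by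
      have : (L.take j).flatten.length + (L.drop j).flatten.length = β.length := by
        rw [hsplit, List.length_append]
      omega
    have hrhs : (α.drop j).sum = ((L.drop j).flatten).sum := by
      rw [← hs, ← List.map_drop, List.sum_flatten]
    calc (β.drop (β.length - t)).sum ≤ (β.drop ((L.take j).flatten.length)).sum :=
          drop_sum_anti _ hslen
      _ = ((L.drop j).flatten).sum := by rw [hdropflat]
      _ = (α.drop j).sum := hrhs.symm

lemma psum_zero {n : ℕ} (a : Fin n → ℕ) : psum a 0 = 0 := by
  simp [psum]

lemma psum_succ {n : ℕ} (a : Fin n → ℕ) (q : ℕ) :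
    psum a (q + 1) = psum a q + (if h : q < n then a ⟨q, h⟩ else 0) := by
  rw [psum, psum, Finset.sum_filter, Finset.sum_filter]
  by_cases h : q < n
  · rw [dif_pos h]
    have step : (∑ j : Fin n, if (j : ℕ) < q + 1 then a j else 0)
        = ∑ j : Fin n, ((if (j : ℕ) < q then a j else 0) + (if j = ⟨q, h⟩ then a j else 0)) := by
      apply Finset.sum_congr rfl
      intro j _
      by_cases hj : (j : ℕ) < q
      · rw [if_pos (by omega), if_pos hj, if_neg (by intro hh; subst hh; simp at hj), add_zero]
      · by_cases hj2 : j = (⟨q, h⟩ : Fin n)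
        · subst hj2; rw [if_pos (by simp), if_neg (by simpa using hj), if_pos rfl, zero_add]
        · have hne : ¬ (j : ℕ) < q + 1 := by
            have : (j : ℕ) ≠ q := fun hh => hj2 (Fin.ext hh)
            omega
          rw [if_neg hne, if_neg hj, if_neg hj2, add_zero]
    rw [step, Finset.sum_add_distrib, Finset.sum_ite_eq' Finset.univ (⟨q, h⟩ : Fin n),
      if_pos (Finset.mem_univ _)]
  · rw [dif_neg h, add_zero]
    apply Finset.sum_congr rfl
    intro j _
    have hj := j.isLt
    have : ((j : ℕ) < q + 1) ↔ ((j : ℕ) < q) := by omega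
    rw [if_congr this rfl rfl]

lemma psum_eq_take {n : ℕ} (a : Fin n → ℕ) (q : ℕ) :
    psum a q = ((List.ofFn a).take q).sum := by
  induction q with
  | zero => simp [psum_zero]
  | succ q ih =>
    rw [psum_succ, ih]
    by_cases h : q < n
    · rw [List.sum_take_succ _ q (by simpa using h), dif_pos h]
      congr 1
      simp [List.getElem_ofFn]
    · rw [dif_neg h, add_zero,
        List.take_of_length_le (by simp; omega),
        List.take_of_length_le (by simp; omega)]

lemma psum_shiftComp {n m : ℕ} (a : Fin n → ℕ) (i : ℕ) :
    psum (shiftComp m (m + n) a) i = psum a (i - m) := by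
  rw [psum, psum]
  have hsub : Finset.univ.filter (fun j : Fin (m+n) => m ≤ (j : ℕ) ∧ (j : ℕ) < i)
      ⊆ Finset.univ.filter (fun j : Fin (m+n) => (j : ℕ) < i) := by
    intro j hj
    simp only [Finset.mem_filter] at *
    exact ⟨hj.1, hj.2.2⟩
  rw [← Finset.sum_subset hsub ?h0]
  case h0 =>
    intro j hj hj2
    simp only [Finset.mem_filter, Finset.mem_univ, true_and] at hj hj2
    rw [shiftComp, dif_neg (by omega)]
  refine Finset.sum_bij' (fun j hj => (⟨(j : ℕ) - m, ?_⟩ : Fin n))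
    (fun q hq => (⟨m + (q : ℕ), ?_⟩ : Fin (m+n))) ?_ ?_ ?_ ?_ ?_
  · simp only [Finset.mem_filter, Finset.mem_univ, true_and] at hj
    have := j.isLt; omega
  · have := q.isLt; omega
  · intro j hj
    simp only [Finset.mem_filter, Finset.mem_univ, true_and] at hj ⊢
    omega
  · intro q hq
    simp only [Finset.mem_filter, Finset.mem_univ, true_and] at hq ⊢
    omega
  · intro j hj
    simp only [Finset.mem_filter, Finset.mem_univ, true_and] at hj
    apply Fin.ext; simp; omega
  · intro q hq
    apply Fin.ext; simp
  · intro j hj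
    simp only [Finset.mem_filter, Finset.mem_univ, true_and] at hj
    rw [shiftComp, dif_pos ⟨hj.1, by have := j.isLt; omega⟩]

lemma ofFn_shiftComp {n m : ℕ} (a : Fin n → ℕ) :
    List.ofFn (shiftComp m (m + n) a) = List.replicate m 0 ++ List.ofFn a := by
  apply List.ext_getElem (by simp)
  intro i h1 h2
  have hi : i < m + n := by simpa using h1
  rw [List.getElem_ofFn]
  by_cases h : i < m
  · rw [List.getElem_append_left (by simpa using h), List.getElem_replicate,
      shiftComp, dif_neg (by simp; omega)]
  · have hm : (List.replicate m (0:ℕ)).length ≤ i := by simp; omega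
    rw [List.getElem_append_right hm, shiftComp,
      dif_pos (⟨by simpa using hm, by simp; omega⟩ : m ≤ ((⟨i, hi⟩ : Fin (m+n)) : ℕ) ∧ _)]
    rw [List.getElem_ofFn]
    congr 1
    apply Fin.ext
    simp

lemma flat_shiftComp {n m : ℕ} (a : Fin n → ℕ) :
    flat (shiftComp m (m + n) a) = flat a := by
  rw [flat, flat, ofFn_shiftComp, List.filter_append]
  have : (List.replicate m 0).filter (fun x : ℕ => x ≠ 0) = [] := by
    rw [List.filter_eq_nil_iff]
    intro x hx
    rw [List.eq_of_mem_replicate hx]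
    simp
  rw [this, List.nil_append]

lemma flat_pos {N : ℕ} (f : Fin N → ℕ) : ∀ x ∈ flat f, x ≠ 0 := by
  intro x hx
  rw [flat, List.mem_filter] at hx
  simpa using hx.2

lemma filter_drop_eq_nil {N : ℕ} (d : Fin N → ℕ) (k : ℕ) (h : ∀ i : Fin N, k ≤ (i : ℕ) → d i = 0) :
    ((List.ofFn d).drop k).filter (fun x => x ≠ 0) = [] := by
  rw [List.filter_eq_nil_iff]
  intro x hx
  rw [List.mem_iff_getElem] at hx
  obtain ⟨j, hj, rfl⟩ := hx
  have hj' : j < N - k := by simpa using hj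
  have hlt : k + j < N := by omega
  rw [List.getElem_drop, List.getElem_ofFn]
  simp only [ne_eq, decide_eq_true_eq, not_not]
  exact h _ (by simpa using Nat.le_add_right k j)

lemma filter_drop_gen (L : List ℕ) (q : ℕ) :
    (L.drop q).filter (fun x => x ≠ 0)
      = (L.filter (fun x => x ≠ 0)).drop ((L.take q).filter (fun x => x ≠ 0)).length := by
  have hsplit : L.filter (fun x => x ≠ 0)
      = (L.take q).filter (fun x => x ≠ 0) ++ (L.drop q).filter (fun x => x ≠ 0) := by
    rw [← List.filter_append, List.take_append_drop]
  rw [hsplit, List.drop_left]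

lemma flat_drop {N : ℕ} (d : Fin N → ℕ) (q : ℕ) :
    ((List.ofFn d).drop q).filter (fun x => x ≠ 0)
      = (flat d).drop (((List.ofFn d).take q).filter (fun x => x ≠ 0)).length := by
  rw [flat]
  exact filter_drop_gen _ q

lemma dominates_shift {n m : ℕ} (a : Fin n → ℕ) (d : Fin (m + n) → ℕ)
    (href : Refines (flat d) (flat a))
    (hsupp : ∀ i : Fin (m + n), m + (flat a).length ≤ (i : ℕ) → d i = 0) :
    Dominates d (shiftComp m (m + n) a) := by
  intro i
  rw [psum_shiftComp]
  set α := flat a with hα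
  set β := flat d with hβ
  set ℓ := α.length with hℓ
  set A := List.ofFn a with hA
  set D := List.ofFn d with hD
  rcases Nat.le_total (i : ℕ) m with him | him
  · have h0 : (i : ℕ) - m = 0 := by omega
    rw [h0, psum_zero]
    exact Nat.zero_le _
  · set q := (i : ℕ) - m with hq
    have hiq : (i : ℕ) = m + q := by omega
    rw [psum_eq_take, psum_eq_take, hiq, ← hA, ← hD]
    have hAsum : A.sum = α.sum := (sum_filter_ne_zero A).symm
    have hDsum : D.sum = β.sum := (sum_filter_ne_zero D).symm
    have hβα : β.sum = α.sum := href.sum_eq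
    have h1 := take_drop_sum A q
    have h2 := take_drop_sum D (m + q)
    have hkey : (D.drop (m + q)).sum ≤ (A.drop q).sum := by
      by_cases hql : q < ℓ
      · -- nonzero entries of the drop are confined
        have e1 : (D.drop (m + q)).sum
            = (β.drop (((D.take (m + q)).filter (fun x => x ≠ 0)).length)).sum := by
          rw [← sum_filter_ne_zero (D.drop (m + q)), hD, filter_drop_gen, ← hD]
          rfl
        -- lengths
        have hlensplit : (((D.take (m + q)).filter (fun x => x ≠ 0)).length)
            + (((D.drop (m + q)).filter (fun x => x ≠ 0)).length) = β.length := by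
          rw [hβ, flat, ← List.length_append, ← List.filter_append, List.take_append_drop]
        have hlen2 : (((D.drop (m + q)).filter (fun x => x ≠ 0)).length) ≤ ℓ - q := by
          have hdd : (D.drop (m + q)).drop (ℓ - q) = D.drop (m + ℓ) := by
            rw [List.drop_drop]
            congr 1
            omega
          have hnil : ((D.drop (m + q)).drop (ℓ - q)).filter (fun x => x ≠ 0) = [] := by
            rw [hdd, hD]
            exact filter_drop_eq_nil d (m + ℓ) hsupp
          have hsplit2 : (D.drop (m + q)).filter (fun x => x ≠ 0)
              = ((D.drop (m + q)).take (ℓ - q)).filter (fun x => x ≠ 0) := by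
            conv_lhs => rw [← List.take_append_drop (ℓ - q) (D.drop (m + q))]
            rw [List.filter_append, hnil, List.append_nil]
          rw [hsplit2]
          calc (((D.drop (m + q)).take (ℓ - q)).filter (fun x => x ≠ 0)).length
              ≤ ((D.drop (m + q)).take (ℓ - q)).length := List.length_filter_le _ _
            _ ≤ ℓ - q := by rw [List.length_take]; omega
        have hj : β.length - (ℓ - q) ≤ (((D.take (m + q)).filter (fun x => x ≠ 0)).length) := by
          omega
        have e2 : α.length - (ℓ - q) = q := by omega
        calc (D.drop (m + q)).sum
            = (β.drop (((D.take (m + q)).filter (fun x => x ≠ 0)).length)).sum := e1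
          _ ≤ (β.drop (β.length - (ℓ - q))).sum := drop_sum_anti _ hj
          _ ≤ (α.drop (α.length - (ℓ - q))).sum := href.suffix_sum (flat_pos a) (ℓ - q)
          _ = (α.drop q).sum := by rw [e2]
          _ ≤ (A.drop q).sum := by
              have e3 : (A.drop q).sum = (α.drop (((A.take q).filter (fun x => x ≠ 0)).length)).sum := by
                rw [← sum_filter_ne_zero (A.drop q), hA, filter_drop_gen, ← hA]
                rfl
              have hj' : (((A.take q).filter (fun x => x ≠ 0)).length) ≤ q := by
                calc ((A.take q).filter (fun x => x ≠ 0)).length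
                    ≤ (A.take q).length := List.length_filter_le _ _
                  _ ≤ q := by rw [List.length_take]; omega
              rw [e3]
              exact drop_sum_anti _ hj'
      · -- q ≥ ℓ : the drop of D is all zeros
        have hnil : (D.drop (m + q)).filter (fun x => x ≠ 0) = [] := by
          rw [hD]
          exact filter_drop_eq_nil d (m + q) (fun i hi => hsupp i (by omega))
        have : (D.drop (m + q)).sum = 0 := by
          rw [← sum_filter_ne_zero (D.drop (m + q)), hnil]
          rfl
        omega
    omega

lemma placeExp_apply {N : ℕ} (α : List ℕ) (ι : Fin α.length → Fin N) (i : Fin N) :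
    placeExp α ι i = ∑ t : Fin α.length, if ι t = i then α.get t else 0 := by
  rw [placeExp, Finsupp.finset_sum_apply]
  apply Finset.sum_congr rfl
  intro t _
  rw [Finsupp.single_apply]

lemma placeExp_apply_self {N : ℕ} (α : List ℕ) {ι : Fin α.length → Fin N}
    (hinj : Function.Injective ι) (t0 : Fin α.length) :
    placeExp α ι (ι t0) = α.get t0 := by
  rw [placeExp_apply, Finset.sum_eq_single t0]
  · rw [if_pos rfl]
  · intro t _ ht
    rw [if_neg (fun he => ht (hinj he))]
  · intro h
    exact absurd (Finset.mem_univ t0) h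

lemma placeExp_apply_zero {N : ℕ} (α : List ℕ) (ι : Fin α.length → Fin N) (i : Fin N)
    (h : ∀ t, ι t ≠ i) : placeExp α ι i = 0 := by
  rw [placeExp_apply]
  apply Finset.sum_eq_zero
  intro t _
  rw [if_neg (h t)]

def suppList {N : ℕ} (d : Fin N → ℕ) : List (Fin N) :=
  (List.finRange N).filter (fun i => d i ≠ 0)

lemma mem_suppList {N : ℕ} (d : Fin N → ℕ) (i : Fin N) : i ∈ suppList d ↔ d i ≠ 0 := by
  simp [suppList, List.mem_filter, List.mem_finRange]

lemma suppList_pairwise {N : ℕ} (d : Fin N → ℕ) : List.Pairwise (· < ·) (suppList d) :=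
  List.Pairwise.sublist List.filter_sublist (List.pairwise_lt_finRange N)

lemma flat_eq_map_suppList {N : ℕ} (d : Fin N → ℕ) : flat d = (suppList d).map d := by
  rw [flat, suppList, List.ofFn_eq_map, List.filter_map]
  rfl

lemma pairwise_lt_eq_of_mem_iff {γ : Type*} [LinearOrder γ] :
    ∀ {l1 l2 : List γ}, List.Pairwise (· < ·) l1 → List.Pairwise (· < ·) l2 →
      (∀ x, x ∈ l1 ↔ x ∈ l2) → l1 = l2 := by
  intro l1
  induction l1 with
  | nil =>
    intro l2 _ _ h
    symm
    rw [List.eq_nil_iff_forall_not_mem]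
    exact fun a ha => absurd ((h a).2 ha) List.not_mem_nil
  | cons x t ih =>
    intro l2 h1 h2 h
    rcases l2 with _ | ⟨y, t2⟩
    · exact absurd ((h x).1 (by simp)) (by simp)
    · have hx2 : x ∈ y :: t2 := (h x).1 (by simp)
      have hy1 : y ∈ x :: t := (h y).2 (by simp)
      have hxy : x = y := by
        rcases List.mem_cons.1 hx2 with h' | hx2'
        · exact h'
        · have hyx : y < x := (List.pairwise_cons.1 h2).1 x hx2'
          rcases List.mem_cons.1 hy1 with h' | hy1'
          · exact h'.symm
          · exact absurd (hyx.trans ((List.pairwise_cons.1 h1).1 y hy1')) (lt_irrefl _)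
      subst hxy
      congr 1
      apply ih (List.pairwise_cons.1 h1).2 (List.pairwise_cons.1 h2).2
      intro z
      constructor
      · intro hz
        rcases List.mem_cons.1 ((h z).1 (List.mem_cons_of_mem _ hz)) with rfl | h'
        · exact absurd ((List.pairwise_cons.1 h1).1 z hz) (lt_irrefl _)
        · exact h'
      · intro hz
        rcases List.mem_cons.1 ((h z).2 (List.mem_cons_of_mem _ hz)) with rfl | h'
        · exact absurd ((List.pairwise_cons.1 h2).1 z hz) (lt_irrefl _)
        · exact h'

lemma ofFn_pairwise {N l : ℕ} {ι : Fin l → Fin N} (hmono : StrictMono ι) :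
    List.Pairwise (· < ·) (List.ofFn ι) := by
  rw [List.pairwise_iff_get]
  intro i j hij
  rw [List.get_ofFn, List.get_ofFn]
  apply hmono
  rw [Fin.lt_def]
  simp only [Fin.coe_cast]
  exact hij

/-- Lemma A: a placement determines the support list and the flattening. -/
lemma placement_spec {N : ℕ} {α : List ℕ} (hpos : ∀ x ∈ α, x ≠ 0)
    {ι : Fin α.length → Fin N} (hmono : StrictMono ι) {d : Fin N → ℕ}
    (hde : ∀ i, d i = placeExp α ι i) :
    List.ofFn ι = suppList d ∧ flat d = α := by
  have hinj := hmono.injective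
  have hval : ∀ t, d (ι t) = α.get t := fun t => (hde _).trans (placeExp_apply_self α hinj t)
  have hmem : ∀ i : Fin N, d i ≠ 0 ↔ ∃ t, ι t = i := by
    intro i
    constructor
    · intro hi
      by_contra hc
      push_neg at hc
      exact hi ((hde i).trans (placeExp_apply_zero α ι i hc))
    · rintro ⟨t, rfl⟩
      rw [hval t]
      exact hpos _ (α.get_mem _)
  have hofn : List.ofFn ι = suppList d := by
    apply pairwise_lt_eq_of_mem_iff (ofFn_pairwise hmono) (suppList_pairwise d)
    intro x
    rw [List.mem_ofFn, mem_suppList, hmem]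
  refine ⟨hofn, ?_⟩
  rw [flat_eq_map_suppList, ← hofn, List.map_ofFn]
  apply List.ext_getElem (by simp)
  intro i h1 h2
  rw [List.getElem_ofFn]
  exact hval _

/-- Lemma B: existence of a placement from the flattening. -/
lemma exists_placement_of_flat {N : ℕ} {d : Fin N → ℕ} {α : List ℕ} (hflat : flat d = α) :
    ∃ ι : Fin α.length → Fin N, StrictMono ι ∧ (∀ i, d i = placeExp α ι i)
      ∧ List.ofFn ι = suppList d := by
  have hmap : α = (suppList d).map d := by rw [← hflat, flat_eq_map_suppList]
  have hlen : (suppList d).length = α.length := by rw [hmap, List.length_map]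
  have hsm : StrictMono (suppList d).get := (suppList_pairwise d).sortedLT.strictMono_get
  have hmono : StrictMono (fun t : Fin α.length => (suppList d).get (Fin.cast hlen.symm t)) := by
    intro t1 t2 h
    apply hsm
    rw [Fin.lt_def]
    simp only [Fin.coe_cast]
    exact h
  have hinj := hmono.injective
  have hval : ∀ t : Fin α.length, d ((suppList d).get (Fin.cast hlen.symm t)) = α.get t := by
    intro t
    rw [List.get_of_eq hmap t]
    simp
  refine ⟨fun t => (suppList d).get (Fin.cast hlen.symm t), hmono, ?_, ?_⟩
  · intro i
    by_cases hi : d i = 0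
    · rw [hi, placeExp_apply_zero]
      intro t ht
      have hmem : i ∈ suppList d := ht ▸ List.get_mem _ _
      rw [mem_suppList] at hmem
      exact hmem hi
    · have hmem : i ∈ suppList d := (mem_suppList d i).2 hi
      rw [List.mem_iff_get] at hmem
      obtain ⟨k, hk⟩ := hmem
      have hik : i = (fun t : Fin α.length => (suppList d).get (Fin.cast hlen.symm t))
          (Fin.cast hlen k) := by
        rw [← hk]
        exact congrArg (suppList d).get (Fin.ext (by simp))
      rw [hik, placeExp_apply_self α hinj, ← hval]
  · apply pairwise_lt_eq_of_mem_iff (ofFn_pairwise hmono) (suppList_pairwise d)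
    intro x
    rw [List.mem_ofFn]
    constructor
    · rintro ⟨t, rfl⟩
      exact List.get_mem _ _
    · intro hx
      rw [List.mem_iff_get] at hx
      obtain ⟨k, hk⟩ := hx
      refine ⟨Fin.cast hlen k, ?_⟩
      rw [← hk]
      exact congrArg (suppList d).get (Fin.ext (by simp))

lemma placement_unique {N : ℕ} {α : List ℕ} (hpos : ∀ x ∈ α, x ≠ 0)
    {ι ι' : Fin α.length → Fin N} (h : StrictMono ι) (h' : StrictMono ι')
    (he : placeExp α ι = placeExp α ι') : ι = ι' := by
  have h1 := (placement_spec hpos h (d := fun i => placeExp α ι i) (fun i => rfl)).1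
  have h2 := (placement_spec hpos h' (d := fun i => placeExp α ι i)
    (fun i => by rw [he])).1
  exact List.ofFn_inj.1 (h1.trans h2.symm)

lemma placement_bound {N : ℕ} {α : List ℕ} (hpos : ∀ x ∈ α, x ≠ 0)
    {ι : Fin α.length → Fin N} (hmono : StrictMono ι) {d : Fin N → ℕ}
    (hde : ∀ i, d i = placeExp α ι i) (k : ℕ) :
    (∀ t, (ι t : ℕ) < k) ↔ (∀ i : Fin N, k ≤ (i : ℕ) → d i = 0) := by
  obtain ⟨hofn, hflat⟩ := placement_spec hpos hmono hde
  constructor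
  · intro hb i hi
    by_contra hne
    have hm : i ∈ suppList d := (mem_suppList d i).2 hne
    rw [← hofn, List.mem_ofFn] at hm
    obtain ⟨t, rfl⟩ := hm
    exact absurd (hb t) (by omega)
  · intro hb t
    by_contra hkt
    have h0 : d (ι t) = 0 := hb _ (by omega)
    rw [hde, placeExp_apply_self α hmono.injective] at h0
    exact hpos _ (α.get_mem _) h0

lemma length_le_of_bound {N l k : ℕ} {ι : Fin l → Fin N} (hmono : StrictMono ι)
    (hb : ∀ t, (ι t : ℕ) < k) : l ≤ k := by
  have hinj : Function.Injective (fun t => (⟨(ι t : ℕ), hb t⟩ : Fin k)) := by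
    intro t1 t2 h
    exact hmono.injective (Fin.ext (by simpa [Fin.ext_iff] using h))
  simpa using Fintype.card_le_of_injective _ hinj

lemma prod_monomial {T : Type*} {N : ℕ} (s : Finset T) (f : T → (Fin N →₀ ℕ)) :
    (∏ t ∈ s, MvPolynomial.monomial (f t) (1 : ℤ)) = MvPolynomial.monomial (∑ t ∈ s, f t) 1 := by
  classical
  induction s using Finset.cons_induction with
  | empty => simp [MvPolynomial.monomial_zero']
  | cons a s ha ih =>
    rw [Finset.prod_cons, Finset.sum_cons, ih, MvPolynomial.monomial_mul, one_mul]

lemma Mqs_eq (N k : ℕ) (α : List ℕ) :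
    Mqs N k α = ∑ i ∈ (Finset.univ : Finset (Fin α.length → Fin N)).filter
      (fun i : Fin α.length → Fin N => StrictMono i ∧ ∀ t, (i t : ℕ) < k),
      MvPolynomial.monomial (placeExp α i) 1 := by
  rw [Mqs]
  apply Finset.sum_congr rfl
  intro ι _
  rw [placeExp, ← prod_monomial]
  apply Finset.prod_congr rfl
  intro t _
  rw [MvPolynomial.X_pow_eq_monomial]

lemma symm_eq_iff {N : ℕ} (b d : Fin N → ℕ) :
    Finsupp.equivFunOnFinite.symm b = Finsupp.equivFunOnFinite.symm d ↔ b = d :=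
  Equiv.injective _ |>.eq_iff

lemma coeff_Mqs {N k : ℕ} {α : List ℕ} (hpos : ∀ x ∈ α, x ≠ 0) (d : Fin N → ℕ) :
    MvPolynomial.coeff (Finsupp.equivFunOnFinite.symm d) (Mqs N k α)
      = if flat d = α ∧ (∀ i : Fin N, k ≤ (i : ℕ) → d i = 0) then 1 else 0 := by
  rw [Mqs_eq, MvPolynomial.coeff_sum]
  by_cases hcond : flat d = α ∧ (∀ i : Fin N, k ≤ (i : ℕ) → d i = 0)
  · rw [if_pos hcond]
    obtain ⟨ι₀, hmono, hde, hofn⟩ := exists_placement_of_flat hcond.1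
    have hpe : placeExp α ι₀ = Finsupp.equivFunOnFinite.symm d := by
      apply Finsupp.ext
      intro i
      rw [Finsupp.coe_equivFunOnFinite_symm, hde i]
    have hbound : ∀ t, (ι₀ t : ℕ) < k := (placement_bound hpos hmono hde k).2 hcond.2
    have hmem : ι₀ ∈ (Finset.univ : Finset (Fin α.length → Fin N)).filter
        (fun i : Fin α.length → Fin N => StrictMono i ∧ ∀ t, (i t : ℕ) < k) := by
      rw [Finset.mem_filter]
      exact ⟨Finset.mem_univ _, hmono, hbound⟩
    have hz : ∀ ι ∈ (Finset.univ : Finset (Fin α.length → Fin N)).filter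
        (fun i : Fin α.length → Fin N => StrictMono i ∧ ∀ t, (i t : ℕ) < k), ι ≠ ι₀ →
        MvPolynomial.coeff (Finsupp.equivFunOnFinite.symm d)
          ((MvPolynomial.monomial (placeExp α ι)) (1:ℤ)) = 0 := by
      intro ι hι hne
      rw [Finset.mem_filter] at hι
      rw [MvPolynomial.coeff_monomial, if_neg]
      intro he
      exact hne (placement_unique hpos hι.2.1 hmono (he.trans hpe.symm))
    refine (Finset.sum_eq_single_of_mem ι₀ hmem hz).trans ?_
    rw [MvPolynomial.coeff_monomial, if_pos hpe]
  · rw [if_neg hcond]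
    apply Finset.sum_eq_zero
    intro ι hι
    rw [Finset.mem_filter] at hι
    rw [MvPolynomial.coeff_monomial, if_neg]
    intro he
    have hde : ∀ i, d i = placeExp α ι i := by
      intro i
      rw [he, Finsupp.coe_equivFunOnFinite_symm]
    exact hcond ⟨(placement_spec hpos hι.2.1 hde).2,
      (placement_bound hpos hι.2.1 hde k).1 hι.2.2⟩

lemma sum_univ_eq_flat_sum {N : ℕ} (d : Fin N → ℕ) : ∑ i, d i = (flat d).sum := by
  rw [flat, sum_filter_ne_zero, List.sum_ofFn]

lemma mem_wcFinset {N k : ℕ} (d : Fin N → ℕ) : d ∈ wcFinset N k ↔ ∀ i, d i ≤ k := by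
  simp [wcFinset, Fintype.mem_piFinset, Finset.mem_range, Nat.lt_succ_iff]

lemma coeff_slideM {N : ℕ} (a' d : Fin N → ℕ) :
    MvPolynomial.coeff (Finsupp.equivFunOnFinite.symm d) (slideM a')
      = if Dominates d a' ∧ flat d = flat a' then 1 else 0 := by
  rw [slideM, MvPolynomial.coeff_sum]
  by_cases hcond : Dominates d a' ∧ flat d = flat a'
  · rw [if_pos hcond]
    have hmem : d ∈ (wcFinset N (∑ i, a' i)).filter
        (fun b => Dominates b a' ∧ flat b = flat a') := by
      rw [Finset.mem_filter]
      refine ⟨(mem_wcFinset d).2 ?_, hcond⟩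
      intro i
      calc d i ≤ ∑ j, d j := Finset.single_le_sum (fun j _ => Nat.zero_le _) (Finset.mem_univ i)
        _ = (flat d).sum := sum_univ_eq_flat_sum d
        _ = (flat a').sum := by rw [hcond.2]
        _ = ∑ j, a' j := (sum_univ_eq_flat_sum a').symm
    have hz : ∀ b ∈ (wcFinset N (∑ i, a' i)).filter
        (fun b => Dominates b a' ∧ flat b = flat a'), b ≠ d →
        MvPolynomial.coeff (Finsupp.equivFunOnFinite.symm d)
          ((MvPolynomial.monomial (Finsupp.equivFunOnFinite.symm b)) (1:ℤ)) = 0 := by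
      intro b hb hne
      rw [MvPolynomial.coeff_monomial, if_neg (fun he => hne ((symm_eq_iff b d).1 he))]
    refine (Finset.sum_eq_single_of_mem d hmem hz).trans ?_
    rw [MvPolynomial.coeff_monomial, if_pos rfl]
  · rw [if_neg hcond]
    apply Finset.sum_eq_zero
    intro b hb
    rw [Finset.mem_filter] at hb
    rw [MvPolynomial.coeff_monomial, if_neg]
    intro he
    exact hcond (((symm_eq_iff b d).1 he) ▸ hb.2)

lemma coeff_slideF {N : ℕ} (a' d : Fin N → ℕ) :
    MvPolynomial.coeff (Finsupp.equivFunOnFinite.symm d) (slideF a')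
      = if Dominates d a' ∧ Refines (flat d) (flat a') then 1 else 0 := by
  rw [slideF, MvPolynomial.coeff_sum]
  by_cases hcond : Dominates d a' ∧ Refines (flat d) (flat a')
  · rw [if_pos hcond]
    have hmem : d ∈ (wcFinset N (∑ i, a' i)).filter
        (fun b => Dominates b a' ∧ Refines (flat b) (flat a')) := by
      rw [Finset.mem_filter]
      refine ⟨(mem_wcFinset d).2 ?_, hcond⟩
      intro i
      calc d i ≤ ∑ j, d j := Finset.single_le_sum (fun j _ => Nat.zero_le _) (Finset.mem_univ i)
        _ = (flat d).sum := sum_univ_eq_flat_sum d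
        _ = (flat a').sum := hcond.2.sum_eq
        _ = ∑ j, a' j := (sum_univ_eq_flat_sum a').symm
    have hz : ∀ b ∈ (wcFinset N (∑ i, a' i)).filter
        (fun b => Dominates b a' ∧ Refines (flat b) (flat a')), b ≠ d →
        MvPolynomial.coeff (Finsupp.equivFunOnFinite.symm d)
          ((MvPolynomial.monomial (Finsupp.equivFunOnFinite.symm b)) (1:ℤ)) = 0 := by
      intro b hb hne
      rw [MvPolynomial.coeff_monomial, if_neg (fun he => hne ((symm_eq_iff b d).1 he))]
    refine (Finset.sum_eq_single_of_mem d hmem hz).trans ?_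
    rw [MvPolynomial.coeff_monomial, if_pos rfl]
  · rw [if_neg hcond]
    apply Finset.sum_eq_zero
    intro b hb
    rw [Finset.mem_filter] at hb
    rw [MvPolynomial.coeff_monomial, if_neg]
    intro he
    exact hcond (((symm_eq_iff b d).1 he) ▸ hb.2)

lemma coeff_Fqs {N k : ℕ} {α : List ℕ} (hpos : ∀ x ∈ α, x ≠ 0) (d : Fin N → ℕ) :
    MvPolynomial.coeff (Finsupp.equivFunOnFinite.symm d) (Fqs N k α)
      = if Refines (flat d) α ∧ (∀ i : Fin N, k ≤ (i : ℕ) → d i = 0) then 1 else 0 := by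
  rw [Fqs, MvPolynomial.coeff_sum]
  by_cases hcond : Refines (flat d) α ∧ (∀ i : Fin N, k ≤ (i : ℕ) → d i = 0)
  · rw [if_pos hcond]
    have hsum : (flat d).sum = α.sum := hcond.1.sum_eq
    set c0 : Composition α.sum :=
      ⟨flat d, fun {i} hi => Nat.pos_of_ne_zero (flat_pos d i hi), hsum⟩ with hc0
    obtain ⟨ι₀, hmono, hde, hofn⟩ := exists_placement_of_flat (rfl : flat d = flat d)
    have hbound : ∀ t, (ι₀ t : ℕ) < k :=
      (placement_bound (flat_pos d) hmono hde k).2 hcond.2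
    have hmem : c0 ∈ (Finset.univ : Finset (Composition α.sum)).filter
        (fun c => Refines c.blocks α ∧ c.blocks.length ≤ k) := by
      rw [Finset.mem_filter]
      exact ⟨Finset.mem_univ _, hcond.1, length_le_of_bound hmono hbound⟩
    have hz : ∀ c ∈ (Finset.univ : Finset (Composition α.sum)).filter
        (fun c => Refines c.blocks α ∧ c.blocks.length ≤ k), c ≠ c0 →
        MvPolynomial.coeff (Finsupp.equivFunOnFinite.symm d) (Mqs N k c.blocks) = 0 := by
      intro c hc hne
      rw [coeff_Mqs (fun x hx => (c.blocks_pos hx).ne') d, if_neg]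
      intro hcc
      exact hne (Composition.ext hcc.1.symm)
    refine (Finset.sum_eq_single_of_mem c0 hmem hz).trans ?_
    rw [coeff_Mqs (flat_pos d) d, if_pos ⟨rfl, hcond.2⟩]
  · rw [if_neg hcond]
    apply Finset.sum_eq_zero
    intro c hc
    rw [Finset.mem_filter] at hc
    rw [coeff_Mqs (fun x hx => (c.blocks_pos hx).ne') d, if_neg]
    intro hcc
    exact hcond ⟨hcc.1 ▸ hc.2.1, hcc.2⟩

lemma aeval_monomial_sub {N k : ℕ} (b : Fin N → ℕ) :
    (MvPolynomial.aeval (fun j : Fin N =>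
      if (j : ℕ) < k then (MvPolynomial.X j : MvPolynomial (Fin N) ℤ) else 0))
      (MvPolynomial.monomial (Finsupp.equivFunOnFinite.symm b) (1:ℤ))
      = if (∀ i : Fin N, k ≤ (i : ℕ) → b i = 0)
        then MvPolynomial.monomial (Finsupp.equivFunOnFinite.symm b) (1:ℤ) else 0 := by
  rw [MvPolynomial.aeval_monomial]
  by_cases h : ∀ i : Fin N, k ≤ (i : ℕ) → b i = 0
  · rw [if_pos h, map_one, one_mul]
    conv_rhs => rw [MvPolynomial.monomial_eq]
    rw [MvPolynomial.C_1, one_mul]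
    apply Finsupp.prod_congr
    intro i hi
    rw [Finsupp.mem_support_iff, Finsupp.coe_equivFunOnFinite_symm] at hi
    rw [if_pos]
    by_contra hik
    exact hi (h i (by omega))
  · rw [if_neg h]
    push_neg at h
    obtain ⟨i0, hk, hb⟩ := h
    rw [Finsupp.prod, map_one, one_mul]
    apply Finset.prod_eq_zero (i := i0)
    · rw [Finsupp.mem_support_iff, Finsupp.coe_equivFunOnFinite_symm]
      exact hb
    · rw [if_neg (by omega)]
      rw [Finsupp.coe_equivFunOnFinite_symm]
      exact zero_pow hb

lemma coeff_aeval_sum {N : ℕ} (k : ℕ) (S : Finset (Fin N → ℕ)) (d : Fin N → ℕ) :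
    MvPolynomial.coeff (Finsupp.equivFunOnFinite.symm d)
      ((MvPolynomial.aeval (fun j : Fin N =>
        if (j : ℕ) < k then (MvPolynomial.X j : MvPolynomial (Fin N) ℤ) else 0))
        (∑ b ∈ S, MvPolynomial.monomial (Finsupp.equivFunOnFinite.symm b) (1:ℤ)))
      = if d ∈ S ∧ (∀ i : Fin N, k ≤ (i : ℕ) → d i = 0) then 1 else 0 := by
  rw [map_sum, MvPolynomial.coeff_sum]
  by_cases hcond : d ∈ S ∧ (∀ i : Fin N, k ≤ (i : ℕ) → d i = 0)
  · rw [if_pos hcond]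
    have hz : ∀ b ∈ S, b ≠ d →
        MvPolynomial.coeff (Finsupp.equivFunOnFinite.symm d)
          ((MvPolynomial.aeval (fun j : Fin N =>
            if (j : ℕ) < k then (MvPolynomial.X j : MvPolynomial (Fin N) ℤ) else 0))
            (MvPolynomial.monomial (Finsupp.equivFunOnFinite.symm b) (1:ℤ))) = 0 := by
      intro b hb hne
      simp only [aeval_monomial_sub]
      by_cases hb2 : ∀ i : Fin N, k ≤ (i : ℕ) → b i = 0
      · rw [if_pos hb2, MvPolynomial.coeff_monomial,
          if_neg (fun he => hne ((symm_eq_iff b d).1 he))]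
      · rw [if_neg hb2, MvPolynomial.coeff_zero]
    refine (Finset.sum_eq_single_of_mem d hcond.1 hz).trans ?_
    simp only [aeval_monomial_sub]
    rw [if_pos hcond.2, MvPolynomial.coeff_monomial, if_pos rfl]
  · rw [if_neg hcond]
    apply Finset.sum_eq_zero
    intro b hb
    simp only [aeval_monomial_sub]
    by_cases hb2 : ∀ i : Fin N, k ≤ (i : ℕ) → b i = 0
    · rw [if_pos hb2, MvPolynomial.coeff_monomial, if_neg]
      intro he
      have hbd := (symm_eq_iff b d).1 he
      subst hbd
      exact hcond ⟨hb, hb2⟩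
    · rw [if_neg hb2, MvPolynomial.coeff_zero]

lemma coeff_aeval_slideM {N : ℕ} (k : ℕ) (a' d : Fin N → ℕ) :
    MvPolynomial.coeff (Finsupp.equivFunOnFinite.symm d)
      ((MvPolynomial.aeval (fun j : Fin N =>
        if (j : ℕ) < k then (MvPolynomial.X j : MvPolynomial (Fin N) ℤ) else 0))
        (slideM a'))
      = if (Dominates d a' ∧ flat d = flat a') ∧ (∀ i : Fin N, k ≤ (i : ℕ) → d i = 0)
        then 1 else 0 := by
  rw [slideM, coeff_aeval_sum]
  apply if_congr _ rfl rfl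
  constructor
  · rintro ⟨hmem, hsmall⟩
    rw [Finset.mem_filter] at hmem
    exact ⟨hmem.2, hsmall⟩
  · rintro ⟨hcond, hsmall⟩
    refine ⟨?_, hsmall⟩
    rw [Finset.mem_filter]
    refine ⟨(mem_wcFinset d).2 ?_, hcond⟩
    intro i
    calc d i ≤ ∑ j, d j := Finset.single_le_sum (fun j _ => Nat.zero_le _) (Finset.mem_univ i)
      _ = (flat d).sum := sum_univ_eq_flat_sum d
      _ = (flat a').sum := by rw [hcond.2]
      _ = ∑ j, a' j := (sum_univ_eq_flat_sum a').symm

lemma coeff_aeval_slideF {N : ℕ} (k : ℕ) (a' d : Fin N → ℕ) :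
    MvPolynomial.coeff (Finsupp.equivFunOnFinite.symm d)
      ((MvPolynomial.aeval (fun j : Fin N =>
        if (j : ℕ) < k then (MvPolynomial.X j : MvPolynomial (Fin N) ℤ) else 0))
        (slideF a'))
      = if (Dominates d a' ∧ Refines (flat d) (flat a')) ∧ (∀ i : Fin N, k ≤ (i : ℕ) → d i = 0)
        then 1 else 0 := by
  rw [slideF, coeff_aeval_sum]
  apply if_congr _ rfl rfl
  constructor
  · rintro ⟨hmem, hsmall⟩
    rw [Finset.mem_filter] at hmem
    exact ⟨hmem.2, hsmall⟩
  · rintro ⟨hcond, hsmall⟩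
    refine ⟨?_, hsmall⟩
    rw [Finset.mem_filter]
    refine ⟨(mem_wcFinset d).2 ?_, hcond⟩
    intro i
    calc d i ≤ ∑ j, d j := Finset.single_le_sum (fun j _ => Nat.zero_le _) (Finset.mem_univ i)
      _ = (flat d).sum := sum_univ_eq_flat_sum d
      _ = (flat a').sum := hcond.2.sum_eq
      _ = ∑ j, a' j := (sum_univ_eq_flat_sum a').symm

lemma exists_nat_placement_iff {N : ℕ} {α : List ℕ} (hpos : ∀ x ∈ α, x ≠ 0) (d : ℕ →₀ ℕ)
    (hsupp : ∀ i : ℕ, N ≤ i → d i = 0) :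
    (∃ i : Fin α.length → ℕ, StrictMono i ∧
        d = ∑ t : Fin α.length, Finsupp.single (i t) (α.get t))
      ↔ flat (fun j : Fin N => d (j : ℕ)) = α := by
  constructor
  · rintro ⟨ι, hmono, hd⟩
    have happ : ∀ mm : ℕ, d mm = ∑ t : Fin α.length, if ι t = mm then α.get t else 0 := by
      intro mm
      rw [hd, Finsupp.finset_sum_apply]
      exact Finset.sum_congr rfl (fun t _ => Finsupp.single_apply)
    have hval : ∀ t, d (ι t) = α.get t := by
      intro t
      rw [happ, Finset.sum_eq_single t]
      · rw [if_pos rfl]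
      · intro t' _ hne
        rw [if_neg (fun he => hne (hmono.injective he))]
      · intro h
        exact absurd (Finset.mem_univ t) h
    have hlt : ∀ t, ι t < N := by
      intro t
      by_contra hc
      have h0 : d (ι t) = 0 := hsupp _ (by omega)
      rw [hval t] at h0
      exact hpos _ (α.get_mem _) h0
    have hmonof : StrictMono (fun t => (⟨ι t, hlt t⟩ : Fin N)) := by
      intro t1 t2 h
      rw [Fin.lt_def]
      exact hmono h
    have hde : ∀ jj : Fin N, d (jj : ℕ) = placeExp α (fun t => (⟨ι t, hlt t⟩ : Fin N)) jj := by
      intro jj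
      rw [placeExp_apply, happ]
      apply Finset.sum_congr rfl
      intro t _
      congr 1
      simp [Fin.ext_iff]
    exact (placement_spec hpos hmonof hde).2
  · intro hflat
    obtain ⟨ιf, hmono, hde, _⟩ := exists_placement_of_flat hflat
    refine ⟨fun t => (ιf t : ℕ), ?_, ?_⟩
    · intro t1 t2 h
      exact hmono h
    · apply Finsupp.ext
      intro mm
      rw [Finsupp.finset_sum_apply]
      by_cases hmN : mm < N
      · have h1 : d mm = placeExp α ιf ⟨mm, hmN⟩ := hde ⟨mm, hmN⟩
        rw [h1, placeExp_apply]
        apply Finset.sum_congr rfl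
        intro t _
        rw [Finsupp.single_apply]
        by_cases he : (ιf t : ℕ) = mm
        · rw [if_pos (Fin.ext he), if_pos he]
        · rw [if_neg (fun hh => he (by rw [hh])), if_neg he]
      · rw [hsupp mm (by omega)]
        symm
        apply Finset.sum_eq_zero
        intro t _
        rw [Finsupp.single_apply, if_neg]
        intro hh
        simp only at hh
        have h2 := (ιf t).isLt
        omega

lemma coeff_MqsFun (α : List ℕ) (d : ℕ →₀ ℕ) :
    MvPowerSeries.coeff d (MqsFun α)
      = if ∃ i : Fin α.length → ℕ, StrictMono i ∧
          d = ∑ t : Fin α.length, Finsupp.single (i t) (α.get t) then 1 else 0 := by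
  rw [MvPowerSeries.coeff_apply, MqsFun]

lemma coeff_FqsFun {α : List ℕ} (hpos : ∀ x ∈ α, x ≠ 0) {N : ℕ} (d : ℕ →₀ ℕ)
    (hsupp : ∀ i : ℕ, N ≤ i → d i = 0) :
    MvPowerSeries.coeff d (FqsFun α)
      = if Refines (flat (fun j : Fin N => d (j : ℕ))) α then 1 else 0 := by
  rw [FqsFun, map_sum]
  have hterm : ∀ c : Composition α.sum,
      MvPowerSeries.coeff d (MqsFun c.blocks)
        = if flat (fun j : Fin N => d (j : ℕ)) = c.blocks then 1 else 0 := by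
    intro c
    rw [coeff_MqsFun]
    by_cases h : flat (fun j : Fin N => d (j : ℕ)) = c.blocks
    · rw [if_pos h, if_pos ((exists_nat_placement_iff
        (fun x hx => (c.blocks_pos hx).ne') d hsupp).2 h)]
    · rw [if_neg h, if_neg (fun he => h ((exists_nat_placement_iff
        (fun x hx => (c.blocks_pos hx).ne') d hsupp).1 he))]
  by_cases hcond : Refines (flat (fun j : Fin N => d (j : ℕ))) α
  · rw [if_pos hcond]
    have hsum : (flat (fun j : Fin N => d (j : ℕ))).sum = α.sum := hcond.sum_eq
    set c0 : Composition α.sum :=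
      ⟨flat (fun j : Fin N => d (j : ℕ)),
        fun {i} hi => Nat.pos_of_ne_zero (flat_pos _ i hi), hsum⟩ with hc0
    have hmem : c0 ∈ (Finset.univ : Finset (Composition α.sum)).filter
        (fun c => Refines c.blocks α) := by
      rw [Finset.mem_filter]
      exact ⟨Finset.mem_univ _, hcond⟩
    have hz : ∀ c ∈ (Finset.univ : Finset (Composition α.sum)).filter
        (fun c => Refines c.blocks α), c ≠ c0 →
        MvPowerSeries.coeff d (MqsFun c.blocks) = 0 := by
      intro c hc hne
      rw [hterm, if_neg]
      intro hcc
      exact hne (Composition.ext hcc.symm)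
    refine (Finset.sum_eq_single_of_mem c0 hmem hz).trans ?_
    rw [hterm, if_pos rfl]
  · rw [if_neg hcond]
    apply Finset.sum_eq_zero
    intro c hc
    rw [Finset.mem_filter] at hc
    rw [hterm, if_neg]
    intro hcc
    exact hcond (hcc ▸ hc.2)

/-- setting `x_{m+ℓ+1} = ⋯ = x_{m+n} = 0` in `𝔐_{0^m × a}` gives
`M_{flat(a)}(x_1, …, x_{m+ℓ})`, and likewise for `𝔉` and `F`; consequently, as `m → ∞`
the slide polynomials of `0^m × a` converge coefficientwise to the monomial and
fundamental quasisymmetric functions of `flat(a)`. -/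
theorem slide_stable_limit {n : ℕ} (a : Fin n → ℕ) (l : ℕ) (hl : l = (flat a).length) :
    (∀ m : ℕ, 1 ≤ m →
      (MvPolynomial.aeval (fun j : Fin (m + n) =>
          if (j : ℕ) < m + l then (MvPolynomial.X j : MvPolynomial (Fin (m + n)) ℤ) else 0))
          (slideM (shiftComp m (m + n) a)) = Mqs (m + n) (m + l) (flat a) ∧
      (MvPolynomial.aeval (fun j : Fin (m + n) =>
          if (j : ℕ) < m + l then (MvPolynomial.X j : MvPolynomial (Fin (m + n)) ℤ) else 0))
          (slideF (shiftComp m (m + n) a)) = Fqs (m + n) (m + l) (flat a)) ∧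
    (∀ d : ℕ →₀ ℕ, ∃ M : ℕ, ∀ m : ℕ, M ≤ m →
      MvPolynomial.coeff (Finsupp.equivFunOnFinite.symm fun j : Fin (m + n) => d (j : ℕ))
          (slideM (shiftComp m (m + n) a)) = MvPowerSeries.coeff d (MqsFun (flat a))) ∧
    (∀ d : ℕ →₀ ℕ, ∃ M : ℕ, ∀ m : ℕ, M ≤ m →
      MvPolynomial.coeff (Finsupp.equivFunOnFinite.symm fun j : Fin (m + n) => d (j : ℕ))
          (slideF (shiftComp m (m + n) a)) = MvPowerSeries.coeff d (FqsFun (flat a))) := by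
  subst hl
  have hpos : ∀ x ∈ flat a, x ≠ 0 := flat_pos a
  refine ⟨?_, ?_, ?_⟩
  · intro m hm
    have hfl : flat (shiftComp m (m + n) a) = flat a := flat_shiftComp a
    constructor
    · apply MvPolynomial.ext
      intro D
      have hD : Finsupp.equivFunOnFinite.symm (Finsupp.equivFunOnFinite D) = D :=
        Equiv.symm_apply_apply _ _
      rw [← hD, coeff_aeval_slideM, coeff_Mqs hpos]
      apply if_congr _ rfl rfl
      constructor
      · rintro ⟨⟨hdom, hflat⟩, hsmall⟩
        exact ⟨hflat.trans hfl, hsmall⟩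
      · rintro ⟨hflat, hsmall⟩
        refine ⟨⟨?_, hflat.trans hfl.symm⟩, hsmall⟩
        apply dominates_shift
        · rw [hflat]
          exact refines_refl _
        · exact hsmall
    · apply MvPolynomial.ext
      intro D
      have hD : Finsupp.equivFunOnFinite.symm (Finsupp.equivFunOnFinite D) = D :=
        Equiv.symm_apply_apply _ _
      rw [← hD, coeff_aeval_slideF, coeff_Fqs hpos]
      apply if_congr _ rfl rfl
      constructor
      · rintro ⟨⟨hdom, href⟩, hsmall⟩
        exact ⟨hfl ▸ href, hsmall⟩
      · rintro ⟨href, hsmall⟩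
        refine ⟨⟨?_, hfl.symm ▸ href⟩, hsmall⟩
        exact dominates_shift a _ href hsmall
  · intro d
    refine ⟨d.support.sup id + 1, ?_⟩
    intro m hm
    have hsupp : ∀ i : ℕ, m ≤ i → d i = 0 := by
      intro i hi
      by_contra hne
      have h1 : i ∈ d.support := Finsupp.mem_support_iff.2 hne
      have h2 := Finset.le_sup (f := id) h1
      simp only [id] at h2
      omega
    have hfl : flat (shiftComp m (m + n) a) = flat a := flat_shiftComp a
    rw [coeff_slideM, coeff_MqsFun]
    apply if_congr _ rfl rfl
    rw [exists_nat_placement_iff hpos d (N := m + n) (fun i hi => hsupp i (by omega))]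
    constructor
    · rintro ⟨hdom, hflat⟩
      exact hflat.trans hfl
    · intro hflat
      refine ⟨?_, hflat.trans hfl.symm⟩
      apply dominates_shift
      · rw [hflat]
        exact refines_refl _
      · intro i hi
        exact hsupp _ (by omega)
  · intro d
    refine ⟨d.support.sup id + 1, ?_⟩
    intro m hm
    have hsupp : ∀ i : ℕ, m ≤ i → d i = 0 := by
      intro i hi
      by_contra hne
      have h1 : i ∈ d.support := Finsupp.mem_support_iff.2 hne
      have h2 := Finset.le_sup (f := id) h1
      simp only [id] at h2
      omega
    have hfl : flat (shiftComp m (m + n) a) = flat a := flat_shiftComp a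
    rw [coeff_slideF, coeff_FqsFun hpos d (N := m + n) (fun i hi => hsupp i (by omega))]
    apply if_congr _ rfl rfl
    constructor
    · rintro ⟨hdom, href⟩
      exact hfl ▸ href
    · intro href
      refine ⟨?_, hfl.symm ▸ href⟩
      apply dominates_shift a _ href
      intro i hi
      exact hsupp _ (by omega)


end SlidePaper
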